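/- The map sending (μ, ν) to (μ', ν') with 2μ' = (2aμ + 2bν + c)/(2gμ + 2hν + i) and 2ν' = (2dμ + 2eν + f)/(2gμ + 2hν + i), for a matrix ((a,b,c),(d,e,f),(g,h,i)) ∈ GL₃(ℤ), defines a group action of GL₃(ℤ) on the set of pairs (μ, ν) ∈ ℝ² such that {1, μ, ν} is linearly independent over ℚ. -/

import Mathlib

/-- The fractional linear transformation of `(μ, ν)` associated to a matrix
`((a,b,c),(d,e,f),(g,h,i)) ∈ GL₃(ℤ)`:
`2μ' = (2aμ + 2bν + c)/(2gμ + 2hν + i)`, `2ν' = (2dμ + 2eν + f)/(2gμ + 2hν + i)`. -/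
noncomputable def heisAct3 (A : GL (Fin 3) ℤ) (p : ℝ × ℝ) : ℝ × ℝ :=
  ((2 * ((A : Matrix (Fin 3) (Fin 3) ℤ) 0 0 : ℝ) * p.1 + 2 * ((A : Matrix (Fin 3) (Fin 3) ℤ) 0 1 : ℝ) * p.2 +
        ((A : Matrix (Fin 3) (Fin 3) ℤ) 0 2 : ℝ)) /
      (2 * (2 * ((A : Matrix (Fin 3) (Fin 3) ℤ) 2 0 : ℝ) * p.1 + 2 * ((A : Matrix (Fin 3) (Fin 3) ℤ) 2 1 : ℝ) * p.2 +
        ((A : Matrix (Fin 3) (Fin 3) ℤ) 2 2 : ℝ))),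
    (2 * ((A : Matrix (Fin 3) (Fin 3) ℤ) 1 0 : ℝ) * p.1 + 2 * ((A : Matrix (Fin 3) (Fin 3) ℤ) 1 1 : ℝ) * p.2 +
        ((A : Matrix (Fin 3) (Fin 3) ℤ) 1 2 : ℝ)) /
      (2 * (2 * ((A : Matrix (Fin 3) (Fin 3) ℤ) 2 0 : ℝ) * p.1 + 2 * ((A : Matrix (Fin 3) (Fin 3) ℤ) 2 1 : ℝ) * p.2 +
        ((A : Matrix (Fin 3) (Fin 3) ℤ) 2 2 : ℝ))))

lemma li_extract (x y z : ℝ) (li : LinearIndependent ℚ ![x,y,z]) (r0 r1 r2 : ℚ)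
    (h : (r0:ℝ)*x + (r1:ℝ)*y + (r2:ℝ)*z = 0) : r0 = 0 ∧ r1 = 0 ∧ r2 = 0 := by
  have := Fintype.linearIndependent_iff.mp li ![r0, r1, r2] (by
    simp [Fin.sum_univ_three, Rat.smul_def]
    linarith)
  exact ⟨this 0, this 1, this 2⟩

lemma li_aux (a b c d e f g h i ε : ℤ) (hε : ε = 1 ∨ ε = -1)
    (hdet : a*e*i - a*f*h - b*d*i + b*f*g + c*d*h - c*e*g = ε)
    (μ ν : ℝ) (li : LinearIndependent ℚ ![(1:ℝ), μ, ν]) :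
    (2*(g:ℝ)*μ + 2*(h:ℝ)*ν + (i:ℝ) ≠ 0) ∧
    LinearIndependent ℚ ![(1:ℝ),
      (2*(a:ℝ)*μ + 2*(b:ℝ)*ν + (c:ℝ)) / (2*(2*(g:ℝ)*μ + 2*(h:ℝ)*ν + (i:ℝ))),
      (2*(d:ℝ)*μ + 2*(e:ℝ)*ν + (f:ℝ)) / (2*(2*(g:ℝ)*μ + 2*(h:ℝ)*ν + (i:ℝ)))] := by
  have hε0 : (ε:ℚ) ≠ 0 := by rcases hε with h'|h' <;> simp [h']
  have hD : 2*(g:ℝ)*μ + 2*(h:ℝ)*ν + (i:ℝ) ≠ 0 := by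
    intro h0
    obtain ⟨h1, h2, h3⟩ := li_extract 1 μ ν li (i:ℚ) (2*g) (2*h) (by push_cast; linarith)
    have hg : g = 0 := by simpa using h2
    have hh : h = 0 := by simpa using h3
    have hi : i = 0 := by exact_mod_cast h1
    rw [hg, hh, hi] at hdet
    simp at hdet
    rcases hε with h'|h' <;> omega
  refine ⟨hD, ?_⟩
  rw [Fintype.linearIndependent_iff]
  intro q hq
  simp [Fin.sum_univ_three, Rat.smul_def] at hq
  set q0 := q 0; set q1 := q 1; set q2 := q 2
  have hq' : (q0:ℝ) * (2*(2*(g:ℝ)*μ + 2*(h:ℝ)*ν + (i:ℝ)))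
      + (q1:ℝ) * (2*(a:ℝ)*μ + 2*(b:ℝ)*ν + (c:ℝ))
      + (q2:ℝ) * (2*(d:ℝ)*μ + 2*(e:ℝ)*ν + (f:ℝ)) = 0 := by
    have h2D : (2:ℝ)*(2*(g:ℝ)*μ + 2*(h:ℝ)*ν + (i:ℝ)) ≠ 0 := by
      intro h0; exact hD (by linarith)
    have hD2 : 2 * (μ * (g:ℝ) + ν * (h:ℝ)) + (i:ℝ) ≠ 0 := by
      intro h0; exact hD (by linarith)
    field_simp at hq
    linarith [hq]
  obtain ⟨E0, E1, E2⟩ := li_extract 1 μ ν li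
    (2*q0*i + q1*c + q2*f) (2*(2*q0*g + q1*a + q2*d)) (2*(2*q0*h + q1*b + q2*e))
    (by push_cast; linear_combination hq')
  have EA : (a:ℚ)*q1 + (d:ℚ)*q2 + (g:ℚ)*(2*q0) = 0 := by
    have := mul_left_cancel₀ (two_ne_zero (α := ℚ)) (by simpa using E1); linarith [this]
  have EB : (b:ℚ)*q1 + (e:ℚ)*q2 + (h:ℚ)*(2*q0) = 0 := by
    have := mul_left_cancel₀ (two_ne_zero (α := ℚ)) (by simpa using E2); linarith [this]
  have EC : (c:ℚ)*q1 + (f:ℚ)*q2 + (i:ℚ)*(2*q0) = 0 := by linarith [E0]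
  have hdetQ : (a:ℚ)*e*i - a*f*h - b*d*i + b*f*g + c*d*h - c*e*g = (ε:ℚ) := by
    exact_mod_cast hdet
  have hq1 : q1 = 0 := by
    have : (ε:ℚ) * q1 = 0 := by
      linear_combination (-q1) * hdetQ + ((e:ℚ)*i - (h:ℚ)*f) * EA + ((g:ℚ)*f - (d:ℚ)*i) * EB + ((d:ℚ)*h - (g:ℚ)*e) * EC
    exact (mul_eq_zero.mp this).resolve_left hε0
  have hq2 : q2 = 0 := by
    have : (ε:ℚ) * q2 = 0 := by
      linear_combination (-q2) * hdetQ + ((h:ℚ)*c - (b:ℚ)*i) * EA + ((a:ℚ)*i - (g:ℚ)*c) * EB + ((g:ℚ)*b - (a:ℚ)*h) * EC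
    exact (mul_eq_zero.mp this).resolve_left hε0
  have hq0 : q0 = 0 := by
    have : (ε:ℚ) * (2*q0) = 0 := by
      linear_combination (-2*q0) * hdetQ + ((b:ℚ)*f - (e:ℚ)*c) * EA + ((d:ℚ)*c - (a:ℚ)*f) * EB + ((a:ℚ)*e - (d:ℚ)*b) * EC
    have h2 := (mul_eq_zero.mp this).resolve_left hε0
    linarith [h2]
  intro j
  fin_cases j <;> assumption

lemma gl3_det (A : GL (Fin 3) ℤ) :
    (A : Matrix (Fin 3) (Fin 3) ℤ) 0 0 * (A : Matrix (Fin 3) (Fin 3) ℤ) 1 1 * (A : Matrix (Fin 3) (Fin 3) ℤ) 2 2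
      - (A : Matrix (Fin 3) (Fin 3) ℤ) 0 0 * (A : Matrix (Fin 3) (Fin 3) ℤ) 1 2 * (A : Matrix (Fin 3) (Fin 3) ℤ) 2 1
      - (A : Matrix (Fin 3) (Fin 3) ℤ) 0 1 * (A : Matrix (Fin 3) (Fin 3) ℤ) 1 0 * (A : Matrix (Fin 3) (Fin 3) ℤ) 2 2
      + (A : Matrix (Fin 3) (Fin 3) ℤ) 0 1 * (A : Matrix (Fin 3) (Fin 3) ℤ) 1 2 * (A : Matrix (Fin 3) (Fin 3) ℤ) 2 0
      + (A : Matrix (Fin 3) (Fin 3) ℤ) 0 2 * (A : Matrix (Fin 3) (Fin 3) ℤ) 1 0 * (A : Matrix (Fin 3) (Fin 3) ℤ) 2 1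
      - (A : Matrix (Fin 3) (Fin 3) ℤ) 0 2 * (A : Matrix (Fin 3) (Fin 3) ℤ) 1 1 * (A : Matrix (Fin 3) (Fin 3) ℤ) 2 0
      = 1 ∨
    (A : Matrix (Fin 3) (Fin 3) ℤ) 0 0 * (A : Matrix (Fin 3) (Fin 3) ℤ) 1 1 * (A : Matrix (Fin 3) (Fin 3) ℤ) 2 2
      - (A : Matrix (Fin 3) (Fin 3) ℤ) 0 0 * (A : Matrix (Fin 3) (Fin 3) ℤ) 1 2 * (A : Matrix (Fin 3) (Fin 3) ℤ) 2 1
      - (A : Matrix (Fin 3) (Fin 3) ℤ) 0 1 * (A : Matrix (Fin 3) (Fin 3) ℤ) 1 0 * (A : Matrix (Fin 3) (Fin 3) ℤ) 2 2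
      + (A : Matrix (Fin 3) (Fin 3) ℤ) 0 1 * (A : Matrix (Fin 3) (Fin 3) ℤ) 1 2 * (A : Matrix (Fin 3) (Fin 3) ℤ) 2 0
      + (A : Matrix (Fin 3) (Fin 3) ℤ) 0 2 * (A : Matrix (Fin 3) (Fin 3) ℤ) 1 0 * (A : Matrix (Fin 3) (Fin 3) ℤ) 2 1
      - (A : Matrix (Fin 3) (Fin 3) ℤ) 0 2 * (A : Matrix (Fin 3) (Fin 3) ℤ) 1 1 * (A : Matrix (Fin 3) (Fin 3) ℤ) 2 0
      = -1 := by
  have h1 : ((A : Matrix (Fin 3) (Fin 3) ℤ) * ((A⁻¹ : GL (Fin 3) ℤ) : Matrix (Fin 3) (Fin 3) ℤ)) = 1 := by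
    rw [← Units.val_mul, mul_inv_cancel, Units.val_one]
  have hu : IsUnit (A : Matrix (Fin 3) (Fin 3) ℤ).det :=
    IsUnit.of_mul_eq_one _ (by rw [← Matrix.det_mul, h1, Matrix.det_one])
  have := Int.isUnit_iff.mp hu
  rw [Matrix.det_fin_three] at this
  exact this

theorem part1 (A : GL (Fin 3) ℤ) (μ ν : ℝ) (li : LinearIndependent ℚ ![(1 : ℝ), μ, ν]) :
      2 * ((A : Matrix (Fin 3) (Fin 3) ℤ) 2 0 : ℝ) * μ + 2 * ((A : Matrix (Fin 3) (Fin 3) ℤ) 2 1 : ℝ) * ν +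
        ((A : Matrix (Fin 3) (Fin 3) ℤ) 2 2 : ℝ) ≠ 0 ∧
      LinearIndependent ℚ ![(1 : ℝ), (heisAct3 A (μ, ν)).1, (heisAct3 A (μ, ν)).2] := by
  rcases gl3_det A with hd | hd
  · obtain ⟨h1, h2⟩ := li_aux _ _ _ _ _ _ _ _ _ 1 (Or.inl rfl) hd μ ν li
    refine ⟨h1, ?_⟩
    simpa only [heisAct3] using h2
  · obtain ⟨h1, h2⟩ := li_aux _ _ _ _ _ _ _ _ _ (-1) (Or.inr rfl) hd μ ν li
    refine ⟨h1, ?_⟩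
    simpa only [heisAct3] using h2


lemma heisAct3_eval (C : GL (Fin 3) ℤ) (x y : ℝ) : heisAct3 C (x, y) =
      ((2 * ((C : Matrix (Fin 3) (Fin 3) ℤ) 0 0 : ℝ) * x + 2 * ((C : Matrix (Fin 3) (Fin 3) ℤ) 0 1 : ℝ) * y +
        ((C : Matrix (Fin 3) (Fin 3) ℤ) 0 2 : ℝ)) /
      (2 * (2 * ((C : Matrix (Fin 3) (Fin 3) ℤ) 2 0 : ℝ) * x + 2 * ((C : Matrix (Fin 3) (Fin 3) ℤ) 2 1 : ℝ) * y +
        ((C : Matrix (Fin 3) (Fin 3) ℤ) 2 2 : ℝ))),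
      (2 * ((C : Matrix (Fin 3) (Fin 3) ℤ) 1 0 : ℝ) * x + 2 * ((C : Matrix (Fin 3) (Fin 3) ℤ) 1 1 : ℝ) * y +
        ((C : Matrix (Fin 3) (Fin 3) ℤ) 1 2 : ℝ)) /
      (2 * (2 * ((C : Matrix (Fin 3) (Fin 3) ℤ) 2 0 : ℝ) * x + 2 * ((C : Matrix (Fin 3) (Fin 3) ℤ) 2 1 : ℝ) * y +
        ((C : Matrix (Fin 3) (Fin 3) ℤ) 2 2 : ℝ)))) := rfl

lemma div_trick (N D E : ℝ) (hD : D ≠ 0) (hE : E ≠ 0) :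
    (N / E) / (2 * (D / E)) = N / (2 * D) := by
  field_simp

set_option maxHeartbeats 1000000 in
theorem part3 (A B : GL (Fin 3) ℤ) (μ ν : ℝ) (li : LinearIndependent ℚ ![(1 : ℝ), μ, ν]) :
    heisAct3 (A * B) (μ, ν) = heisAct3 A (heisAct3 B (μ, ν)) := by
  have hDB := (part1 B μ ν li).1
  have hDAB := (part1 (A * B) μ ν li).1
  have hent : ∀ j k : Fin 3, (((A * B : GL (Fin 3) ℤ) : Matrix (Fin 3) (Fin 3) ℤ) j k : ℝ)
      = ((A : Matrix (Fin 3) (Fin 3) ℤ) j 0 : ℝ) * ((B : Matrix (Fin 3) (Fin 3) ℤ) 0 k : ℝ)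
      + ((A : Matrix (Fin 3) (Fin 3) ℤ) j 1 : ℝ) * ((B : Matrix (Fin 3) (Fin 3) ℤ) 1 k : ℝ)
      + ((A : Matrix (Fin 3) (Fin 3) ℤ) j 2 : ℝ) * ((B : Matrix (Fin 3) (Fin 3) ℤ) 2 k : ℝ) := by
    intro j k
    rw [Units.val_mul, Matrix.mul_apply, Fin.sum_univ_three]
    push_cast
    ring
  have key : ∀ j : Fin 3, 2 * ((A : Matrix (Fin 3) (Fin 3) ℤ) j 0 : ℝ) * (heisAct3 B (μ, ν)).1
      + 2 * ((A : Matrix (Fin 3) (Fin 3) ℤ) j 1 : ℝ) * (heisAct3 B (μ, ν)).2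
      + ((A : Matrix (Fin 3) (Fin 3) ℤ) j 2 : ℝ)
      = (2 * (((A * B : GL (Fin 3) ℤ) : Matrix (Fin 3) (Fin 3) ℤ) j 0 : ℝ) * μ
        + 2 * (((A * B : GL (Fin 3) ℤ) : Matrix (Fin 3) (Fin 3) ℤ) j 1 : ℝ) * ν
        + (((A * B : GL (Fin 3) ℤ) : Matrix (Fin 3) (Fin 3) ℤ) j 2 : ℝ))
      / (2 * ((B : Matrix (Fin 3) (Fin 3) ℤ) 2 0 : ℝ) * μ + 2 * ((B : Matrix (Fin 3) (Fin 3) ℤ) 2 1 : ℝ) * ν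
        + ((B : Matrix (Fin 3) (Fin 3) ℤ) 2 2 : ℝ)) := by
    intro j
    simp only [heisAct3, hent]
    generalize hX : (2 * ((B : Matrix (Fin 3) (Fin 3) ℤ) 2 0 : ℝ) * μ + 2 * ((B : Matrix (Fin 3) (Fin 3) ℤ) 2 1 : ℝ) * ν
        + ((B : Matrix (Fin 3) (Fin 3) ℤ) 2 2 : ℝ)) = X at hDB ⊢
    field_simp
    rw [← hX]
    ring
  have hp : heisAct3 B (μ, ν) = ((heisAct3 B (μ, ν)).1, (heisAct3 B (μ, ν)).2) := rfl
  rw [hp, heisAct3_eval A, key 0, key 1, key 2, heisAct3_eval (A * B) μ ν, Prod.mk.injEq]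
  exact ⟨(div_trick _ _ _ hDAB hDB).symm, (div_trick _ _ _ hDAB hDB).symm⟩

theorem stmt3 :
    (∀ (A : GL (Fin 3) ℤ) (μ ν : ℝ), LinearIndependent ℚ ![(1 : ℝ), μ, ν] →
      2 * ((A : Matrix (Fin 3) (Fin 3) ℤ) 2 0 : ℝ) * μ + 2 * ((A : Matrix (Fin 3) (Fin 3) ℤ) 2 1 : ℝ) * ν +
        ((A : Matrix (Fin 3) (Fin 3) ℤ) 2 2 : ℝ) ≠ 0 ∧
      LinearIndependent ℚ ![(1 : ℝ), (heisAct3 A (μ, ν)).1, (heisAct3 A (μ, ν)).2]) ∧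
    (∀ (μ ν : ℝ), LinearIndependent ℚ ![(1 : ℝ), μ, ν] → heisAct3 1 (μ, ν) = (μ, ν)) ∧
    (∀ (A B : GL (Fin 3) ℤ) (μ ν : ℝ), LinearIndependent ℚ ![(1 : ℝ), μ, ν] →
      heisAct3 (A * B) (μ, ν) = heisAct3 A (heisAct3 B (μ, ν))) := by
  refine ⟨part1, ?_, part3⟩
  intro μ ν li
  simp [heisAct3, Units.val_one, Matrix.one_apply]
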